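/- Suppose D follows Data Model 1 and fix p ≥ 1. For any column d_i of D (with d_i ≠ 0) and any vector c ∈ ℝ^{M₁} with cᵀd_i = 1, it holds that ‖D_{k_i}ᵀ c‖_p^p ≥ Δ_min / ‖d_i‖₂^p. -/

import Mathlib

open Matrix Finset MeasureTheory ProbabilityTheory

noncomputable section

namespace Paper

instance {m n α : Type*} [MeasurableSpace α] : MeasurableSpace (Matrix m n α) :=
  MeasurableSpace.pi

/-- Euclidean (`ℓ₂`) norm of a vector. -/
def enorm {ι : Type*} [Fintype ι] (v : ι → ℝ) : ℝ := Real.sqrt (∑ i, v i ^ 2)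

/-- `ℓ_p` norm of a vector. -/
def pnorm {ι : Type*} [Fintype ι] (p : ℝ) (v : ι → ℝ) : ℝ := (∑ i, |v i| ^ p) ^ (1 / p)

/-- Spectral norm (largest singular value) of a real matrix. -/
def spec {a b : Type*} [Fintype a] [Fintype b] (M : Matrix a b ℝ) : ℝ :=
  ⨆ v : { v : b → ℝ // enorm v = 1 }, enorm (M.mulVec v.1)

/-- Smallest singular value of a real matrix. -/
def smin {a b : Type*} [Fintype a] [Fintype b] (M : Matrix a b ℝ) : ℝ :=
  ⨅ v : { v : b → ℝ // enorm v = 1 }, enorm (M.mulVec v.1)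

/-- Column space (span of the columns) of a matrix. -/
def colSpan {a b : Type*} (M : Matrix a b ℝ) : Submodule ℝ (a → ℝ) :=
  Submodule.span ℝ (Set.range Mᵀ)

/-- Requirement 1 with parameters `κ` and `p`; the columns of the data matrix are indexed by
`Fin m × Fin n`, the first coordinate being the cluster index. -/
def Req1 {m n : ℕ} (A : Matrix (Fin m × Fin n) (Fin m × Fin n) ℝ) (κ p : ℝ) : Prop :=
  ∀ i : Fin m × Fin n,
    κ / ((m : ℝ) - 1) * ∑ j ∈ univ.filter (fun j : Fin m × Fin n => j.1 ≠ i.1), |A j i| ^ p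
      < ∑ j ∈ univ.filter (fun j : Fin m × Fin n => j.1 = i.1), |A j i| ^ p

/-- Feasibility for the direction-search problem: `cᵢᵀ dᵢ = 1` for every column. -/
def Feasible {a ι : Type*} [Fintype a] [Fintype ι] (D C : Matrix a ι ℝ) : Prop :=
  ∀ i, dotProduct (Cᵀ i) (Dᵀ i) = 1

/-- Optimal point of `min_C ∑ᵢ ‖Dᵀ cᵢ‖_p  s.t.  cᵢᵀ dᵢ = 1`. -/
def IsOptimal {a ι : Type*} [Fintype a] [Fintype ι] (p : ℝ) (D C : Matrix a ι ℝ) : Prop :=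
  Feasible D C ∧ ∀ C' : Matrix a ι ℝ, Feasible D C' →
    ∑ i, pnorm p (Dᵀ.mulVec (Cᵀ i)) ≤ ∑ i, pnorm p (Dᵀ.mulVec (C'ᵀ i))

/-- Optimal point of `min_C ∑ᵢ ‖Dᵀ cᵢ‖₂  s.t.  cᵢᵀ dᵢ = 1`. -/
def IsOptimal2 {a ι : Type*} [Fintype a] [Fintype ι] (D C : Matrix a ι ℝ) : Prop :=
  Feasible D C ∧ ∀ C' : Matrix a ι ℝ, Feasible D C' →
    ∑ i, enorm (Dᵀ.mulVec (Cᵀ i)) ≤ ∑ i, enorm (Dᵀ.mulVec (C'ᵀ i))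

/-- The adjacency matrix `A = |Dᵀ C|`. -/
def adjacency {a ι : Type*} [Fintype a] [Fintype ι] (D C : Matrix a ι ℝ) : Matrix ι ι ℝ :=
  Matrix.of fun j i => |(Dᵀ * C) j i|

/-- `Δ_min`: the permeance statistic of the clusters. -/
def Dmin {M₁ m n s rs : ℕ} (D : Matrix (Fin M₁) (Fin m × Fin n) ℝ)
    (Smat : Matrix (Fin M₁) (Fin s) ℝ) (Ud : Fin m → Matrix (Fin M₁) (Fin rs) ℝ)
    (p : ℝ) : ℝ :=
  ⨅ j : Fin m, ⨅ u : { u : Fin M₁ → ℝ // u ∈ colSpan Smat ⊔ colSpan (Ud j) ∧ enorm u = 1 },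
    ∑ t : Fin n, |dotProduct u.1 (Dᵀ (j, t))| ^ p

/-- `Δ̇_max`. -/
def Ddotmax {M₁ m n rs : ℕ} (D : Matrix (Fin M₁) (Fin m × Fin n) ℝ)
    (Ud : Fin m → Matrix (Fin M₁) (Fin rs) ℝ) (p : ℝ) : ℝ :=
  ⨆ j : Fin m, ⨆ u : { u : Fin rs → ℝ // enorm u = 1 },
    ∑ t : Fin n, |dotProduct u.1 ((Ud j)ᵀ.mulVec (Dᵀ (j, t)))| ^ p

/-- `Δ̄_max`. -/
def Dbarmax {M₁ m n s : ℕ} (D : Matrix (Fin M₁) (Fin m × Fin n) ℝ)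
    (Smat : Matrix (Fin M₁) (Fin s) ℝ) (p : ℝ) : ℝ :=
  ⨆ j : Fin m, ⨆ u : { u : Fin s → ℝ // enorm u = 1 },
    ∑ t : Fin n, |dotProduct u.1 (Smatᵀ.mulVec (Dᵀ (j, t)))| ^ p

/-- `φ = max_{j ≠ t} ‖U̇ₜᵀ U̇ⱼ‖`. -/
def phi {M₁ m rs : ℕ} (Ud : Fin m → Matrix (Fin M₁) (Fin rs) ℝ) : ℝ :=
  ⨆ j : Fin m, ⨆ t : Fin m, if j ≠ t then spec ((Ud t)ᵀ * Ud j) else 0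

/-- `z_{δ,x}`. -/
def zd (m n : ℕ) (δ x : ℝ) : ℝ :=
  1 + 2 * Real.sqrt (1 / x * Real.log (2 * n * m / δ)) + 2 / x * Real.log (2 * n * m / δ)

/-- `η_{δ,x}`. -/
def etad (m n : ℕ) (δ x : ℝ) : ℝ :=
  max (4 * zd m n δ x / 3 * Real.log (2 * x * m / δ))
    (Real.sqrt (4 * n * (x + 3) / x ^ 2 * Real.log (2 * x * m / δ)))

/-- `σ_l(x/y, δ)`. -/
def sigl (M₂ : ℕ) (δ x y : ℝ) : ℝ :=
  (x - 2 * Real.sqrt (x * Real.log (2 * M₂ / δ))) /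
    (y + 2 * Real.sqrt ((y - x) * Real.log (2 * M₂ / δ)) + 2 * Real.log (2 * M₂ / δ)
      - 2 * Real.sqrt (x * Real.log (2 * M₂ / δ)))

/-- `σ_u(x/y, δ)`. -/
def sigu (M₂ : ℕ) (δ x y : ℝ) : ℝ :=
  (x + 2 * Real.sqrt (x * Real.log (2 * M₂ / δ)) + 2 * Real.log (2 * M₂ / δ)) /
    (y + 2 * Real.sqrt (x * Real.log (2 * M₂ / δ)) + 2 * Real.log (2 * M₂ / δ)
      - 2 * Real.sqrt ((y - x) * Real.log (2 * M₂ / δ)))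

/-- `c_δ` of Theorems 3 and 8. -/
def cdel (M₁ m r s : ℕ) (δ : ℝ) : ℝ :=
  3 * max 1 (max (Real.sqrt (8 * M₁ * Real.pi / (((M₁ : ℝ) - 1) * ((r : ℝ) - s))))
    (Real.sqrt (16 * M₁ * Real.log (m * r / δ) / (((M₁ : ℝ) - 1) * ((r : ℝ) - s)))))


lemma mulVec_mem_colSpan {a b : Type*} [Fintype a] [Fintype b] (M : Matrix a b ℝ) (x : b → ℝ) :
    M.mulVec x ∈ colSpan M := by
  have h : M.mulVec x = ∑ j, x j • Mᵀ j := by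
    ext k
    simp [Matrix.mulVec, dotProduct, Finset.sum_apply, mul_comm, Matrix.transpose_apply]
  rw [h]
  exact Submodule.sum_mem _ fun j _ => Submodule.smul_mem _ _ (Submodule.subset_span ⟨j, rfl⟩)

lemma inner_eq_dot {M₁ : ℕ} (x y : Fin M₁ → ℝ) :
    (inner ℝ ((WithLp.equiv 2 _).symm x : EuclideanSpace ℝ (Fin M₁))
      ((WithLp.equiv 2 _).symm y) : ℝ) = dotProduct x y := by
  simp [PiLp.inner_apply, dotProduct, RCLike.inner_apply, mul_comm]

lemma enorm_eq_norm {M₁ : ℕ} (v : Fin M₁ → ℝ) :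
    enorm v = ‖((WithLp.equiv 2 _).symm v : EuclideanSpace ℝ (Fin M₁))‖ := by
  rw [EuclideanSpace.norm_eq, enorm]; simp [sq_abs]

set_option maxHeartbeats 1000000 in
/-- lower bound `‖D_{kᵢ}ᵀ c‖_p^p ≥ Δ_min / ‖dᵢ‖₂^p` for any feasible `c`. -/
theorem statement15 (M₁ m n r s : ℕ) (hm : 1 < m) (hn : 0 < n) (hsr : s ≤ r)
    (p : ℝ) (hp : 1 ≤ p)
    (D : Matrix (Fin M₁) (Fin m × Fin n) ℝ)
    (Smat : Matrix (Fin M₁) (Fin s) ℝ)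
    (Ud : Fin m → Matrix (Fin M₁) (Fin (r - s)) ℝ)
    (α : Fin m × Fin n → Fin s → ℝ) (β : Fin m × Fin n → Fin (r - s) → ℝ)
    (hSo : Smatᵀ * Smat = 1)
    (hUo : ∀ j, (Ud j)ᵀ * Ud j = 1)
    (hSU : ∀ j, Smatᵀ * Ud j = 0)
    (hnsub : ∀ i j : Fin m, i ≠ j →
      ¬ (colSpan Smat ⊔ colSpan (Ud i) ≤ colSpan Smat ⊔ colSpan (Ud j)))
    (hcap : ∀ i j : Fin m, i ≠ j →
      (colSpan Smat ⊔ colSpan (Ud i)) ⊓ (colSpan Smat ⊔ colSpan (Ud j)) = colSpan Smat)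
    (hcol : ∀ i : Fin m × Fin n, Dᵀ i = Smat.mulVec (α i) + (Ud i.1).mulVec (β i))
    (i : Fin m × Fin n) (hdi : Dᵀ i ≠ 0)
    (c : Fin M₁ → ℝ) (hc : dotProduct c (Dᵀ i) = 1) :
    Dmin D Smat Ud p / enorm (Dᵀ i) ^ p ≤ ∑ t : Fin n, |dotProduct (Dᵀ (i.1, t)) c| ^ p := by
  classical
  set ι := ((WithLp.equiv 2 (Fin M₁ → ℝ)).symm : (Fin M₁ → ℝ) → EuclideanSpace ℝ (Fin M₁)) with hι
  set W : Submodule ℝ (Fin M₁ → ℝ) := colSpan Smat ⊔ colSpan (Ud i.1) with hW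
  let W' : Submodule ℝ (EuclideanSpace ℝ (Fin M₁)) := W.comap (WithLp.linearEquiv 2 ℝ (Fin M₁ → ℝ)).toLinearMap
  have hmem : ∀ t : Fin n, Dᵀ (i.1, t) ∈ W := fun t => by
    rw [hcol (i.1, t)]
    exact Submodule.add_mem _ (Submodule.mem_sup_left (mulVec_mem_colSpan _ _))
      (Submodule.mem_sup_right (mulVec_mem_colSpan _ _))
  have hdW : Dᵀ i ∈ W := by simpa using hmem i.2
  set c' : EuclideanSpace ℝ (Fin M₁) := ι c with hc'
  set u0 : EuclideanSpace ℝ (Fin M₁) := (W'.orthogonalProjectionOnto c' : EuclideanSpace ℝ (Fin M₁)) with hu0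
  have hu0W : u0 ∈ W' := (W'.orthogonalProjectionOnto c').2
  have hproj : ∀ w : EuclideanSpace ℝ (Fin M₁), w ∈ W' → (inner ℝ w c' : ℝ) = inner ℝ w u0 := by
    intro w hw
    have h0 : (inner ℝ w (c' - u0) : ℝ) = 0 :=
      (Submodule.mem_orthogonal W' _).mp (W'.sub_starProjection_mem_orthogonal c') w hw
    rw [inner_sub_right] at h0
    linarith
  -- d := Dᵀ i, norm positive
  have hdn : (0:ℝ) < ‖ι (Dᵀ i)‖ := by
    rw [norm_pos_iff]
    intro h
    exact hdi ((WithLp.equiv 2 (Fin M₁ → ℝ)).symm.injective (by simpa [hι] using h))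
  have hinner1 : (inner ℝ (ι (Dᵀ i)) u0 : ℝ) = 1 := by
    rw [← hproj (ι (Dᵀ i)) hdW, hc', inner_eq_dot, dotProduct_comm, hc]
  have hu0pos : (0:ℝ) < ‖u0‖ := by
    by_contra h
    push_neg at h
    have : u0 = 0 := norm_le_zero_iff.mp h
    rw [this, inner_zero_right] at hinner1
    norm_num at hinner1
  have hlb : ‖ι (Dᵀ i)‖⁻¹ ≤ ‖u0‖ := by
    rw [inv_le_iff_one_le_mul₀ hdn]
    calc (1:ℝ) = inner ℝ (ι (Dᵀ i)) u0 := hinner1.symm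
      _ ≤ ‖ι (Dᵀ i)‖ * ‖u0‖ := real_inner_le_norm _ _
      _ = ‖u0‖ * ‖ι (Dᵀ i)‖ := mul_comm _ _
  -- unit vector
  set uhat : Fin M₁ → ℝ := WithLp.equiv 2 (Fin M₁ → ℝ) (‖u0‖⁻¹ • u0) with huhat
  have hιuhat : ι uhat = ‖u0‖⁻¹ • u0 := by
    simp [huhat, hι]
  have huhatW : uhat ∈ W := by
    have : (‖u0‖⁻¹ • u0) ∈ W' := Submodule.smul_mem _ _ hu0W
    exact this
  have huhatnorm : enorm uhat = 1 := by
    rw [enorm_eq_norm, ← hι, hιuhat, norm_smul]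
    simp [abs_of_pos hu0pos, inv_mul_cancel₀ (ne_of_gt hu0pos)]
  -- key rewriting of RHS terms
  have hterm : ∀ t : Fin n, |dotProduct (Dᵀ (i.1, t)) c| ^ p
      = ‖u0‖ ^ p * |dotProduct uhat (Dᵀ (i.1, t))| ^ p := by
    intro t
    have h1 : dotProduct (Dᵀ (i.1, t)) c = inner ℝ (ι (Dᵀ (i.1, t))) u0 := by
      rw [← hproj (ι (Dᵀ (i.1, t))) (hmem t)]
      exact (inner_eq_dot _ _).symm
    have h2 : u0 = ‖u0‖ • ι uhat := by
      rw [hιuhat, smul_smul, mul_inv_cancel₀ (ne_of_gt hu0pos), one_smul]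
    have h3 : (inner ℝ (ι (Dᵀ (i.1, t))) u0 : ℝ) = ‖u0‖ * dotProduct uhat (Dᵀ (i.1, t)) := by
      calc (inner ℝ (ι (Dᵀ (i.1, t))) u0 : ℝ)
          = inner ℝ (ι (Dᵀ (i.1, t))) (‖u0‖ • ι uhat) := by rw [← h2]
        _ = ‖u0‖ * inner ℝ (ι (Dᵀ (i.1, t))) (ι uhat) := real_inner_smul_right _ _ _
        _ = ‖u0‖ * dotProduct (Dᵀ (i.1, t)) uhat :=
            congrArg (fun z => ‖u0‖ * z) (inner_eq_dot _ _)
        _ = ‖u0‖ * dotProduct uhat (Dᵀ (i.1, t)) := by rw [dotProduct_comm]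
    rw [h1, h3, abs_mul, abs_of_pos hu0pos,
      Real.mul_rpow (le_of_lt hu0pos) (abs_nonneg _)]
  rw [hW] at huhatW
  clear_value uhat u0
  -- Dmin bound
  set S : ℝ := ∑ t : Fin n, |dotProduct uhat (Dᵀ (i.1, t))| ^ p with hS
  have hSnonneg : 0 ≤ S :=
    Finset.sum_nonneg fun t _ => Real.rpow_nonneg (abs_nonneg _) p
  have hDminS : Dmin D Smat Ud p ≤ S := by
    have hf : ∀ j : Fin m,
        (0:ℝ) ≤ ⨅ u : { u : Fin M₁ → ℝ // u ∈ colSpan Smat ⊔ colSpan (Ud j) ∧ enorm u = 1 },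
          ∑ t : Fin n, |dotProduct u.1 (Dᵀ (j, t))| ^ p := by
      intro j
      exact Real.iInf_nonneg fun u =>
        Finset.sum_nonneg fun t _ => Real.rpow_nonneg (abs_nonneg _) p
    have step1 : Dmin D Smat Ud p
        ≤ ⨅ u : { u : Fin M₁ → ℝ // u ∈ colSpan Smat ⊔ colSpan (Ud i.1) ∧ enorm u = 1 },
          ∑ t : Fin n, |dotProduct u.1 (Dᵀ (i.1, t))| ^ p :=
      ciInf_le ⟨0, by rintro x ⟨j, rfl⟩; exact hf j⟩ i.1
    haveI hne : Nonempty { u : Fin M₁ → ℝ // u ∈ colSpan Smat ⊔ colSpan (Ud i.1) ∧ enorm u = 1 } :=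
      ⟨⟨uhat, huhatW, huhatnorm⟩⟩
    have hbdd : BddBelow (Set.range fun u : { u : Fin M₁ → ℝ // u ∈ colSpan Smat ⊔ colSpan (Ud i.1) ∧ enorm u = 1 } =>
        ∑ t : Fin n, |dotProduct u.1 (Dᵀ (i.1, t))| ^ p) := by
      refine ⟨0, ?_⟩
      rintro x ⟨u, rfl⟩
      exact Finset.sum_nonneg fun t _ => Real.rpow_nonneg (abs_nonneg _) p
    exact le_trans step1 (ciInf_le hbdd (⟨uhat, huhatW, huhatnorm⟩ :
      { u : Fin M₁ → ℝ // u ∈ colSpan Smat ⊔ colSpan (Ud i.1) ∧ enorm u = 1 }))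
  have hDminNonneg : 0 ≤ Dmin D Smat Ud p := Real.iInf_nonneg fun j =>
    Real.iInf_nonneg fun u => Finset.sum_nonneg fun t _ => Real.rpow_nonneg (abs_nonneg _) p
  -- finish
  have hpow : (enorm (Dᵀ i) ^ p)⁻¹ ≤ ‖u0‖ ^ p := by
    rw [enorm_eq_norm, ← hι, ← Real.inv_rpow (le_of_lt hdn)]
    exact Real.rpow_le_rpow (inv_nonneg.mpr (le_of_lt hdn)) hlb (le_trans zero_le_one hp)
  calc Dmin D Smat Ud p / enorm (Dᵀ i) ^ p
      = Dmin D Smat Ud p * (enorm (Dᵀ i) ^ p)⁻¹ := div_eq_mul_inv _ _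
    _ ≤ S * ‖u0‖ ^ p := mul_le_mul hDminS hpow
        (inv_nonneg.mpr (Real.rpow_nonneg (by rw [enorm_eq_norm]; positivity) p)) hSnonneg
    _ = ∑ t : Fin n, |dotProduct (Dᵀ (i.1, t)) c| ^ p := by
        rw [Finset.sum_congr rfl fun t _ => hterm t, ← Finset.mul_sum, mul_comm]

end Paper
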